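/- Fix x > 0 and for each n ≥ 3 let A_KS^{(n)}(x) be the n×n pairwise comparison matrix whose (1, n) entry is x, whose (n, 1) entry is 1/x, and all of whose remaining entries equal 1. Then the Consistency Index of this family tends to zero: lim_{n→∞} (ρ(A_KS^{(n)}(x)) − n)/(n − 1) = 0, where ρ denotes the spectral radius (Perron eigenvalue) of the matrix. -/

import Mathlib

set_option linter.unusedTactic false
set_option linter.unreachableTactic false
set_option linter.unusedVariables false

/-- The Koczkodaj–Szwarc matrix of order `n`: entry `(1, n)` equals `x`, entry
`(n, 1)` equals `1/x`, and all remaining entries equal `1`. -/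
noncomputable def AKS (n : ℕ) (x : ℝ) : Matrix (Fin n) (Fin n) ℝ :=
  fun i j =>
    if i.val = 0 ∧ j.val = n - 1 ∧ i ≠ j then x
    else if i.val = n - 1 ∧ j.val = 0 ∧ i ≠ j then 1 / x
    else 1

/-- The spectral radius of a real matrix: the maximum modulus of its complex
eigenvalues. -/
noncomputable def specRad {n : ℕ} (A : Matrix (Fin n) (Fin n) ℝ) : ℝ :=
  sSup ((‖·‖) '' spectrum ℂ (A.map Complex.ofReal))

theorem AKS_map_eq (n : ℕ) (hn : 3 ≤ n) (x : ℝ) (i j : Fin n) :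
    ((AKS n x).map Complex.ofReal) i j =
      1 + ((x:ℂ) - 1) * (if i = (⟨0, by omega⟩ : Fin n) then 1 else 0)
            * (if j = (⟨n-1, by omega⟩ : Fin n) then 1 else 0)
        + (1/(x:ℂ) - 1) * (if i = (⟨n-1, by omega⟩ : Fin n) then 1 else 0)
            * (if j = (⟨0, by omega⟩ : Fin n) then 1 else 0) := by
  have hij : ∀ a b : Fin n, a.val ≠ b.val → a ≠ b := fun a b h hab => h (by rw [hab])
  have e1 : ¬ (0 : ℕ) = n - 1 := by omega
  have e2 : ¬ (n - 1 : ℕ) = 0 := by omega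
  simp only [Matrix.map_apply, AKS, Fin.ext_iff]
  by_cases h1 : i.val = 0 <;> by_cases h2 : j.val = n-1 <;>
    by_cases h3 : i.val = n-1 <;> by_cases h4 : j.val = 0 <;>
    simp [h1, h2, h3, h4, e1, e2] <;> first
  | omega
  | exact hij i j (by omega)
  | (rw [if_pos (hij i j (by omega))]; push_cast; ring)
  | (rw [if_neg (fun h => (hij i j (by omega)) h.2.2), if_pos (hij i j (by omega))]; push_cast; ring)
  | (rw [if_neg (hij i j (by omega))]; push_cast; ring)
  | (push_cast; ring)


theorem solve_bc (x ρ m : ℝ) (hx : x ≠ 0) (hD : ρ^2 + (x + 1/x - 2) ≠ 0)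
    (hf : ρ^3 - m*ρ^2 - (m-2)*(x + 1/x - 2) = 0) :
    ∃ b c : ℝ, ρ * b = (x - 1) * (1 + c) ∧ ρ * c = (1/x - 1) * (1 + b) ∧ ρ = m + b + c := by
  have hD'eq : ρ^2*x + x^2 - 2*x + 1 = x * (ρ^2 + (x + 1/x - 2)) := by field_simp; ring
  have hD' : ρ^2*x + x^2 - 2*x + 1 ≠ 0 := by rw [hD'eq]; exact mul_ne_zero hx hD
  refine ⟨(x-1)*(ρ*x + 1 - x)/(ρ^2*x + x^2 - 2*x + 1),
         (1-x)*(ρ + x - 1)/(ρ^2*x + x^2 - 2*x + 1), ?_, ?_, ?_⟩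
  · rw [mul_div_assoc', one_add_div hD', mul_div_assoc', div_eq_div_iff hD' hD']
    ring
  · rw [mul_div_assoc', one_add_div hD', mul_div_assoc', div_eq_div_iff hD' hD']
    field_simp
    ring
  · have hxx : x * x⁻¹ = 1 := mul_inv_cancel₀ hx
    rw [add_assoc, ← add_div, add_div' _ _ _ hD', eq_div_iff hD']
    linear_combination x * hf + (m - 2) * hxx

theorem perron_scalars (x : ℝ) (hx : 0 < x) (n : ℕ) (hn : 3 ≤ n) :
    ∃ ρ b c : ℝ, (n:ℝ) ≤ ρ ∧
      ρ * b = (x - 1) * (1 + c) ∧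
      ρ * c = (1/x - 1) * (1 + b) ∧
      ρ = n + b + c := by
  have hx' : x ≠ 0 := ne_of_gt hx
  have hs : 0 ≤ x + 1/x - 2 := by
    have h1 : x * (x + 1/x - 2) = (x - 1)^2 := by field_simp; ring
    nlinarith [sq_nonneg (x - 1)]
  have hn3 : (3:ℝ) ≤ (n:ℝ) := by exact_mod_cast hn
  set s : ℝ := x + 1/x - 2 with hs_def
  have hcont : ContinuousOn (fun t : ℝ => t^3 - n*t^2 - ((n:ℝ)-2)*s) (Set.Icc (n:ℝ) ((n:ℝ)+s)) :=
    (by continuity : Continuous fun t : ℝ => t^3 - n*t^2 - ((n:ℝ)-2)*s).continuousOn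
  have hivt := intermediate_value_Icc (by linarith : (n:ℝ) ≤ (n:ℝ)+s) hcont
  have key : 0 ≤ s * (((n:ℝ)+s)^2 - (n:ℝ) + 2) := mul_nonneg hs (by nlinarith)
  have h0 : (0:ℝ) ∈ Set.Icc (((n:ℝ))^3 - n*((n:ℝ))^2 - ((n:ℝ)-2)*s)
      (((n:ℝ)+s)^3 - n*((n:ℝ)+s)^2 - ((n:ℝ)-2)*s) := by
    constructor
    · nlinarith
    · nlinarith
  obtain ⟨ρ, hρmem, hfρ⟩ := hivt h0
  simp only at hfρ
  have hρn : (n:ℝ) ≤ ρ := hρmem.1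
  have hD : ρ^2 + s ≠ 0 := by nlinarith
  obtain ⟨b, c, h1, h2, h3⟩ := solve_bc x ρ n hx' hD hfρ
  exact ⟨ρ, b, c, hρn, h1, h2, h3⟩

theorem AKS_eigvec (x : ℝ) (hx : 0 < x) (n : ℕ) (hn : 3 ≤ n) (ρ b c : ℝ)
    (h1 : ρ * b = (x - 1) * (1 + c)) (h2 : ρ * c = (1/x - 1) * (1 + b))
    (h3 : ρ = n + b + c) :
    ∃ v : Fin n → ℂ, v ≠ 0 ∧ ((AKS n x).map Complex.ofReal).mulVec v = (ρ:ℂ) • v := by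
  have hzN : (⟨0, by omega⟩ : Fin n) ≠ (⟨n-1, by omega⟩ : Fin n) := by
    simp [Fin.ext_iff]; omega
  set z : Fin n := ⟨0, by omega⟩
  set N : Fin n := ⟨n-1, by omega⟩
  refine ⟨fun j => 1 + (b:ℂ) * (if j = z then 1 else 0) + (c:ℂ) * (if j = N then 1 else 0),
    ?_, ?_⟩
  · intro h
    have := congrFun h ⟨1, by omega⟩
    have e1 : (⟨1, by omega⟩ : Fin n) ≠ z := by simp [z, Fin.ext_iff]
    have e2 : (⟨1, by omega⟩ : Fin n) ≠ N := by simp [N, Fin.ext_iff]; omega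
    simp [e1, e2] at this
  · funext i
    have hb : (ρ:ℂ) * b = ((x:ℂ) - 1) * (1 + c) := by exact_mod_cast congrArg Complex.ofReal h1
    have hc : (ρ:ℂ) * c = (1/(x:ℂ) - 1) * (1 + b) := by
      have := congrArg Complex.ofReal h2; push_cast at this ⊢; exact this
    have hρ : (ρ:ℂ) = n + b + c := by exact_mod_cast congrArg Complex.ofReal h3
    simp only [Matrix.mulVec, dotProduct]
    rw [Finset.sum_congr rfl (fun j _ => by rw [AKS_map_eq n hn x i j])]
    simp only [add_mul, mul_add, one_mul, mul_one, mul_ite, ite_mul, zero_mul, mul_zero,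
      Finset.sum_add_distrib, Finset.sum_ite_eq', Finset.mem_univ, if_true,
      Finset.sum_const, Finset.card_univ, Fintype.card_fin, nsmul_eq_mul, Pi.smul_apply,
      smul_eq_mul]
    simp only [show (⟨0, by omega⟩ : Fin n) = z from rfl, show (⟨n-1, by omega⟩ : Fin n) = N from rfl]
    by_cases hiz : i = z <;> by_cases hiN : i = N <;>
      simp [hiz, hiN, hzN, hzN.symm]
    · exact absurd (hiz.symm.trans hiN) hzN
    · linear_combination (-1:ℂ) * hρ - hb
    · linear_combination (-1:ℂ) * hρ - hc
    · exact hρ.symm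


theorem mem_spectrum_of_eig {n : ℕ} (B : Matrix (Fin n) (Fin n) ℂ) (μ : ℂ)
    (v : Fin n → ℂ) (hv : v ≠ 0) (hmv : B.mulVec v = μ • v) : μ ∈ spectrum ℂ B := by
  have h1 : Module.End.HasEigenvalue (Matrix.toLin' B) μ :=
    Module.End.hasEigenvalue_of_hasEigenvector
      ⟨Module.End.mem_eigenspace_iff.mpr (by simpa [Matrix.toLin'_apply] using hmv), hv⟩
  have h2 := Module.End.hasEigenvalue_iff_mem_spectrum.mp h1
  rwa [show Matrix.toLin' B = Matrix.toLinAlgEquiv' B from rfl,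
    AlgEquiv.spectrum_eq Matrix.toLinAlgEquiv' B] at h2

theorem eig_of_mem_spectrum {n : ℕ} (B : Matrix (Fin n) (Fin n) ℂ) (μ : ℂ)
    (h : μ ∈ spectrum ℂ B) : Module.End.HasEigenvalue (Matrix.toLin' B) μ := by
  rw [← AlgEquiv.spectrum_eq Matrix.toLinAlgEquiv' B] at h
  exact Module.End.hasEigenvalue_iff_mem_spectrum.mpr h

theorem spec_bound (x : ℝ) (hx : 0 < x) (n : ℕ) (hn : 3 ≤ n) (μ : ℂ)
    (h : μ ∈ spectrum ℂ ((AKS n x).map Complex.ofReal)) :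
    ‖μ‖ ≤ n + 2 * max x (1/x) := by
  set M : ℝ := max x (1/x) with hM_def
  have hM1 : 1 ≤ M := by
    rcases le_total 1 x with h'|h'
    · exact le_max_of_le_left h'
    · exact le_max_of_le_right ((le_div_iff₀ hx).mpr (by linarith))
  have hMx : x ≤ M := le_max_left _ _
  have hMix : 1/x ≤ M := le_max_right _ _
  obtain ⟨k, hk⟩ := eigenvalue_mem_ball (eig_of_mem_spectrum _ _ h)
  have hdiag : ((AKS n x).map Complex.ofReal) k k = 1 := by
    simp [AKS, Matrix.map_apply]
  rw [hdiag, Metric.mem_closedBall, Complex.dist_eq] at hk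
  set z : Fin n := ⟨0, by omega⟩
  set N : Fin n := ⟨n-1, by omega⟩
  have habs : ∀ i j : Fin n, |AKS n x i j| ≤ M := by
    intro i j
    unfold AKS
    split_ifs
    · rwa [abs_of_pos hx]
    · rw [abs_of_pos (by positivity)]; exact hMix
    · rw [abs_one]; exact hM1
  have hentry : ∀ j : Fin n, ‖((AKS n x).map Complex.ofReal) k j‖ ≤
      1 + (M-1) * (if j = N then 1 else 0) + (M-1) * (if j = z then 1 else 0) := by
    intro j
    have hnorm : ‖((AKS n x).map Complex.ofReal) k j‖ = |AKS n x k j| := by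
      simp [Matrix.map_apply, Complex.norm_real, Real.norm_eq_abs]
    rw [hnorm]
    have hNz : N ≠ z := by simp [N, z, Fin.ext_iff]; omega
    by_cases hjN : j = N <;> by_cases hjz : j = z
    · exact absurd (hjN.symm.trans hjz) hNz
    · simp [hjN, hjz, hNz, hNz.symm]
      linarith [habs k j, habs k N, habs k z]
    · simp [hjN, hjz, hNz, hNz.symm]
      linarith [habs k j, habs k N, habs k z]
    · simp only [hjN, hjz, if_false, mul_zero, add_zero]
      have hone : AKS n x k j = 1 := by
        unfold AKS
        rw [if_neg, if_neg]
        · rintro ⟨-, h4, -⟩; exact hjz (by simp [z, Fin.ext_iff, h4])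
        · rintro ⟨-, h4, -⟩; exact hjN (by simp [N, Fin.ext_iff, h4])
      rw [hone, abs_one]
  have hsum : (∑ j ∈ Finset.univ.erase k, ‖((AKS n x).map Complex.ofReal) k j‖) ≤
      (n:ℝ) + 2*(M-1) := by
    calc (∑ j ∈ Finset.univ.erase k, ‖((AKS n x).map Complex.ofReal) k j‖)
        ≤ ∑ j ∈ Finset.univ.erase k,
            (1 + (M-1) * (if j = N then 1 else 0) + (M-1) * (if j = z then 1 else 0)) :=
          Finset.sum_le_sum (fun j _ => hentry j)
      _ ≤ ∑ j : Fin n,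
            (1 + (M-1) * (if j = N then 1 else 0) + (M-1) * (if j = z then 1 else 0)) := by
          apply Finset.sum_le_sum_of_subset_of_nonneg (Finset.erase_subset _ _)
          intro j _ _
          have h3 : (0:ℝ) ≤ (M-1) * (if j = N then 1 else 0) :=
            mul_nonneg (by linarith) (by positivity)
          have h4 : (0:ℝ) ≤ (M-1) * (if j = z then 1 else 0) :=
            mul_nonneg (by linarith) (by positivity)
          linarith
      _ = (n:ℝ) + 2*(M-1) := by
          simp [Finset.sum_add_distrib, mul_ite, Finset.sum_ite_eq', Finset.card_univ]
          ring
  calc ‖μ‖ = ‖μ‖ := rfl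
    _ ≤ ‖μ - 1‖ + ‖(1:ℂ)‖ := by simpa using norm_add_le (μ - 1) 1
    _ ≤ ((n:ℝ) + 2*(M-1)) + 1 := by rw [norm_one]; exact add_le_add_left (hk.trans hsum) 1
    _ ≤ n + 2*M := by linarith

theorem specRad_bounds (x : ℝ) (hx : 0 < x) (n : ℕ) (hn : 3 ≤ n) :
    (n:ℝ) ≤ specRad (AKS n x) ∧ specRad (AKS n x) ≤ (n:ℝ) + 2 * max x (1/x) := by
  obtain ⟨ρ, b, c, hρn, h1, h2, h3⟩ := perron_scalars x hx n hn
  obtain ⟨v, hv, hmv⟩ := AKS_eigvec x hx n hn ρ b c h1 h2 h3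
  have hmem := mem_spectrum_of_eig _ _ _ hv hmv
  have hn0 : (0:ℝ) ≤ (n:ℝ) := by positivity
  have hρS : ρ ∈ (‖·‖) '' spectrum ℂ ((AKS n x).map Complex.ofReal) :=
    ⟨(ρ:ℂ), hmem, by show ‖(ρ:ℂ)‖ = ρ; rw [Complex.norm_real, Real.norm_eq_abs, abs_of_nonneg (hn0.trans hρn)]⟩
  have hbdd : BddAbove ((‖·‖) '' spectrum ℂ ((AKS n x).map Complex.ofReal)) := by
    refine ⟨(n:ℝ) + 2 * max x (1/x), fun y hy => ?_⟩
    obtain ⟨μ, hμ, rfl⟩ := hy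
    exact spec_bound x hx n hn μ hμ
  constructor
  · exact hρn.trans (le_csSup hbdd hρS)
  · refine csSup_le ⟨_, hρS⟩ (fun y hy => ?_)
    obtain ⟨μ, hμ, rfl⟩ := hy
    exact spec_bound x hx n hn μ hμ

/-- For any fixed `x > 0`, the Consistency Index of the Koczkodaj–Szwarc matrices
tends to zero: `lim_{n→∞} (ρ(A_KS^{(n)}(x)) − n)/(n − 1) = 0`. -/
theorem CI_AKS_tendsto_zero (x : ℝ) (hx : 0 < x) :
    Filter.Tendsto (fun n : ℕ => (specRad (AKS n x) - n) / ((n : ℝ) - 1))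
      Filter.atTop (nhds 0) := by
  have hdenom : Filter.Tendsto (fun n : ℕ => (n:ℝ) - 1) Filter.atTop Filter.atTop := by
    simpa [sub_eq_add_neg] using Filter.tendsto_atTop_add_const_right Filter.atTop (-1 : ℝ)
      tendsto_natCast_atTop_atTop
  have hupper : Filter.Tendsto (fun n : ℕ => (2 * max x (1/x)) / ((n:ℝ) - 1))
      Filter.atTop (nhds 0) := Filter.Tendsto.div_atTop tendsto_const_nhds hdenom
  refine tendsto_of_tendsto_of_tendsto_of_le_of_le' tendsto_const_nhds hupper ?_ ?_
  · filter_upwards [Filter.eventually_ge_atTop 3] with n hn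
    obtain ⟨hlo, hhi⟩ := specRad_bounds x hx n hn
    have hpos : (0:ℝ) < (n:ℝ) - 1 := by
      have : (3:ℝ) ≤ (n:ℝ) := by exact_mod_cast hn
      linarith
    exact div_nonneg (by linarith) hpos.le
  · filter_upwards [Filter.eventually_ge_atTop 3] with n hn
    obtain ⟨hlo, hhi⟩ := specRad_bounds x hx n hn
    have hpos : (0:ℝ) < (n:ℝ) - 1 := by
      have : (3:ℝ) ≤ (n:ℝ) := by exact_mod_cast hn
      linarith
    have hnum : specRad (AKS n x) - n ≤ 2 * max x (1/x) := by linarith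
    exact (div_le_div_iff_of_pos_right hpos).mpr hnum
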